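/- Let X, Y be C³ vector fields on ℝⁿ. For a C¹ field T of symmetric bilinear maps ℝⁿ × ℝⁿ → ℝⁿ, define its Lie derivative along X by (L_X T)(x)(u,v) = (DT(x)(X(x)))(u,v) − DX(x)( T(x)(u,v) ) + T(x)( DX(x)u, v ) + T(x)( u, DX(x)v ). Then for all x, u, v: D²([X,Y])(x)(u,v) = (L_X (D²Y))(x)(u,v) − (L_Y (D²X))(x)(u,v), where [X,Y](x) = DY(x)(X(x)) − DX(x)(Y(x)). That is, the map X ↦ D²X is a 1-cocycle on the Lie algebra Vect(ℝⁿ) with values in symmetric (2,1)-tensor fields. -/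

import Mathlib

/-- The Lie derivative along the vector field `X` of a field `T` of symmetric bilinear
maps (a (2,1)-tensor field):
`(L_X T)(x)(u,v) = DT(x)(X(x))(u,v) − DX(x)(T(x)(u,v)) + T(x)(DX(x)u, v) + T(x)(u, DX(x)v)`. -/
noncomputable def lieDerivTensor (n : ℕ) (X : (Fin n → ℝ) → (Fin n → ℝ))
    (T : (Fin n → ℝ) → ((Fin n → ℝ) →L[ℝ] (Fin n → ℝ) →L[ℝ] (Fin n → ℝ)))
    (x u v : Fin n → ℝ) : Fin n → ℝ :=
  (fderiv ℝ T x (X x)) u v - fderiv ℝ X x (T x u v)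
    + T x (fderiv ℝ X x u) v + T x u (fderiv ℝ X x v)

lemma fderiv_apply_const {E F : Type*} [NormedAddCommGroup E] [NormedSpace ℝ E]
    [NormedAddCommGroup F] [NormedSpace ℝ F]
    {g : E → (E →L[ℝ] F)} {x : E} (hg : DifferentiableAt ℝ g x) (v u : E) :
    fderiv ℝ (fun z => g z v) x u = fderiv ℝ g x u v := by
  have h : fderiv ℝ (fun z => g z v) x
      = (g x).comp (fderiv ℝ (fun _ : E => v) x) + (fderiv ℝ g x).flip v :=
    fderiv_clm_apply hg (differentiableAt_const v)
  rw [h]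
  simp

lemma fderiv_apply_const2 {E F : Type*} [NormedAddCommGroup E] [NormedSpace ℝ E]
    [NormedAddCommGroup F] [NormedSpace ℝ F]
    {g : E → (E →L[ℝ] E →L[ℝ] F)} {x : E} (hg : DifferentiableAt ℝ g x) (v w u : E) :
    fderiv ℝ (fun z => g z v w) x u = fderiv ℝ g x u v w := by
  have h1 : fderiv ℝ (fun z => g z v w) x u = fderiv ℝ (fun z => g z v) x u w :=
    fderiv_apply_const (hg.clm_apply (differentiableAt_const v)) w u
  rw [h1, fderiv_apply_const hg v u]

set_option maxHeartbeats 2000000 in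
/-- The map `X ↦ D²X` is a 1-cocycle on `Vect(ℝⁿ)` with values in symmetric
(2,1)-tensor fields: `D²[X,Y] = L_X(D²Y) − L_Y(D²X)`. -/
theorem hessian_is_cocycle (n : ℕ)
    (X Y : (Fin n → ℝ) → (Fin n → ℝ))
    (hX : ContDiff ℝ 3 X) (hY : ContDiff ℝ 3 Y) :
    ∀ x u v : Fin n → ℝ,
      fderiv ℝ (fderiv ℝ (fun z => fderiv ℝ Y z (X z) - fderiv ℝ X z (Y z))) x u v
        = lieDerivTensor n X (fun z => fderiv ℝ (fderiv ℝ Y) z) x u v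
          - lieDerivTensor n Y (fun z => fderiv ℝ (fderiv ℝ X) z) x u v := by
  intro x u v
  have hX1 : Differentiable ℝ X := hX.differentiable (by norm_num)
  have hY1 : Differentiable ℝ Y := hY.differentiable (by norm_num)
  have hXd : ContDiff ℝ 2 (fderiv ℝ X) := hX.fderiv_right (by norm_num)
  have hYd : ContDiff ℝ 2 (fderiv ℝ Y) := hY.fderiv_right (by norm_num)
  have hXdd : ContDiff ℝ 1 (fderiv ℝ (fderiv ℝ X)) := hXd.fderiv_right (by norm_num)
  have hYdd : ContDiff ℝ 1 (fderiv ℝ (fderiv ℝ Y)) := hYd.fderiv_right (by norm_num)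
  have hX2 : Differentiable ℝ (fderiv ℝ X) := hXd.differentiable (by norm_num)
  have hY2 : Differentiable ℝ (fderiv ℝ Y) := hYd.differentiable (by norm_num)
  have hX3 : Differentiable ℝ (fderiv ℝ (fderiv ℝ X)) := hXdd.differentiable one_ne_zero
  have hY3 : Differentiable ℝ (fderiv ℝ (fderiv ℝ Y)) := hYdd.differentiable one_ne_zero
  set A : (Fin n → ℝ) → ((Fin n → ℝ) →L[ℝ] (Fin n → ℝ) →L[ℝ] (Fin n → ℝ))
    := fderiv ℝ (fderiv ℝ Y) with hAdef
  set A' : (Fin n → ℝ) → ((Fin n → ℝ) →L[ℝ] (Fin n → ℝ) →L[ℝ] (Fin n → ℝ))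
    := fderiv ℝ (fderiv ℝ X) with hA'def
  set B : (Fin n → ℝ) → (Fin n → ℝ) :=
    fun z => fderiv ℝ Y z (X z) - fderiv ℝ X z (Y z) with hBdef
  have hB2 : ContDiff ℝ 2 B :=
    (hYd.clm_apply (hX.of_le (by norm_num))).sub (hXd.clm_apply (hY.of_le (by norm_num)))
  have hBd : Differentiable ℝ (fderiv ℝ B) :=
    (hB2.fderiv_right (le_refl 2) : ContDiff ℝ 1 (fderiv ℝ B)).differentiable one_ne_zero
  -- pointwise formula for the first derivative of B applied to v
  have hfB : ∀ z, fderiv ℝ B z v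
      = A z v (X z) + fderiv ℝ Y z (fderiv ℝ X z v)
        - (A' z v (Y z) + fderiv ℝ X z (fderiv ℝ Y z v)) := by
    intro z
    have d1 : DifferentiableAt ℝ (fun w => fderiv ℝ Y w (X w)) z :=
      (hY2 z).clm_apply (hX1 z)
    have d2 : DifferentiableAt ℝ (fun w => fderiv ℝ X w (Y w)) z :=
      (hX2 z).clm_apply (hY1 z)
    have hsub : fderiv ℝ B z
        = fderiv ℝ (fun w => fderiv ℝ Y w (X w)) z
          - fderiv ℝ (fun w => fderiv ℝ X w (Y w)) z := fderiv_sub d1 d2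
    have e1 : fderiv ℝ (fun w => fderiv ℝ Y w (X w)) z
        = (fderiv ℝ Y z).comp (fderiv ℝ X z) + (fderiv ℝ (fderiv ℝ Y) z).flip (X z) :=
      fderiv_clm_apply (hY2 z) (hX1 z)
    have e2 : fderiv ℝ (fun w => fderiv ℝ X w (Y w)) z
        = (fderiv ℝ X z).comp (fderiv ℝ Y z) + (fderiv ℝ (fderiv ℝ X) z).flip (Y z) :=
      fderiv_clm_apply (hX2 z) (hY1 z)
    rw [hsub, e1, e2]
    simp only [ContinuousLinearMap.sub_apply, ContinuousLinearMap.add_apply,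
      ContinuousLinearMap.coe_comp', Function.comp_apply, ContinuousLinearMap.flip_apply,
      ← hAdef, ← hA'def]
    abel
  -- second derivative of B applied at u v equals derivative of that expression
  have step1 : fderiv ℝ (fderiv ℝ B) x u v = fderiv ℝ (fun z => fderiv ℝ B z v) x u :=
    (fderiv_apply_const (hBd x) v u).symm
  have step2 : (fun z => fderiv ℝ B z v)
      = fun z => A z v (X z) + fderiv ℝ Y z (fderiv ℝ X z v)
        - (A' z v (Y z) + fderiv ℝ X z (fderiv ℝ Y z v)) := funext hfB
  -- differentiability of the four summands
  have da : DifferentiableAt ℝ (fun z => A z v (X z)) x :=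
    ((hY3 x).clm_apply (differentiableAt_const v)).clm_apply (hX1 x)
  have db : DifferentiableAt ℝ (fun z => fderiv ℝ Y z (fderiv ℝ X z v)) x :=
    (hY2 x).clm_apply ((hX2 x).clm_apply (differentiableAt_const v))
  have dc : DifferentiableAt ℝ (fun z => A' z v (Y z)) x :=
    ((hX3 x).clm_apply (differentiableAt_const v)).clm_apply (hY1 x)
  have dd : DifferentiableAt ℝ (fun z => fderiv ℝ X z (fderiv ℝ Y z v)) x :=
    (hX2 x).clm_apply ((hY2 x).clm_apply (differentiableAt_const v))
  -- derivatives of the four summands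
  have e1 : fderiv ℝ (fun z => A z v (X z)) x u
      = A x v (fderiv ℝ X x u) + fderiv ℝ A x u v (X x) := by
    have h : fderiv ℝ (fun z => A z v (X z)) x
        = (A x v).comp (fderiv ℝ X x) + (fderiv ℝ (fun z => A z v) x).flip (X x) :=
      fderiv_clm_apply ((hY3 x).clm_apply (differentiableAt_const v)) (hX1 x)
    rw [h]
    simp only [ContinuousLinearMap.add_apply, ContinuousLinearMap.coe_comp',
      Function.comp_apply, ContinuousLinearMap.flip_apply]
    rw [fderiv_apply_const (hY3 x) v u]
  have e2 : fderiv ℝ (fun z => fderiv ℝ Y z (fderiv ℝ X z v)) x u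
      = fderiv ℝ Y x (A' x u v) + A x u (fderiv ℝ X x v) := by
    have h : fderiv ℝ (fun z => fderiv ℝ Y z (fderiv ℝ X z v)) x
        = (fderiv ℝ Y x).comp (fderiv ℝ (fun z => fderiv ℝ X z v) x)
          + (fderiv ℝ (fderiv ℝ Y) x).flip (fderiv ℝ X x v) :=
      fderiv_clm_apply (hY2 x) ((hX2 x).clm_apply (differentiableAt_const v))
    rw [h]
    simp only [ContinuousLinearMap.add_apply, ContinuousLinearMap.coe_comp',
      Function.comp_apply, ContinuousLinearMap.flip_apply]
    rw [fderiv_apply_const (hX2 x) v u]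
  have e3 : fderiv ℝ (fun z => A' z v (Y z)) x u
      = A' x v (fderiv ℝ Y x u) + fderiv ℝ A' x u v (Y x) := by
    have h : fderiv ℝ (fun z => A' z v (Y z)) x
        = (A' x v).comp (fderiv ℝ Y x) + (fderiv ℝ (fun z => A' z v) x).flip (Y x) :=
      fderiv_clm_apply ((hX3 x).clm_apply (differentiableAt_const v)) (hY1 x)
    rw [h]
    simp only [ContinuousLinearMap.add_apply, ContinuousLinearMap.coe_comp',
      Function.comp_apply, ContinuousLinearMap.flip_apply]
    rw [fderiv_apply_const (hX3 x) v u]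
  have e4 : fderiv ℝ (fun z => fderiv ℝ X z (fderiv ℝ Y z v)) x u
      = fderiv ℝ X x (A x u v) + A' x u (fderiv ℝ Y x v) := by
    have h : fderiv ℝ (fun z => fderiv ℝ X z (fderiv ℝ Y z v)) x
        = (fderiv ℝ X x).comp (fderiv ℝ (fun z => fderiv ℝ Y z v) x)
          + (fderiv ℝ (fderiv ℝ X) x).flip (fderiv ℝ Y x v) :=
      fderiv_clm_apply (hX2 x) ((hY2 x).clm_apply (differentiableAt_const v))
    rw [h]
    simp only [ContinuousLinearMap.add_apply, ContinuousLinearMap.coe_comp',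
      Function.comp_apply, ContinuousLinearMap.flip_apply]
    rw [fderiv_apply_const (hY2 x) v u]
  -- assemble LHS
  have eLHS : fderiv ℝ (fderiv ℝ B) x u v
      = A x v (fderiv ℝ X x u) + fderiv ℝ A x u v (X x)
        + (fderiv ℝ Y x (A' x u v) + A x u (fderiv ℝ X x v))
        - (A' x v (fderiv ℝ Y x u) + fderiv ℝ A' x u v (Y x)
          + (fderiv ℝ X x (A x u v) + A' x u (fderiv ℝ Y x v))) := by
    rw [step1, step2]
    rw [fderiv_fun_sub (da.fun_add db) (dc.fun_add dd), fderiv_fun_add da db, fderiv_fun_add dc dd]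
    simp only [ContinuousLinearMap.sub_apply, ContinuousLinearMap.add_apply]
    rw [e1, e2, e3, e4]
  -- symmetry facts
  have symA : ∀ z a b, A z a b = A z b a := fun z =>
    second_derivative_symmetric (fun y => (hY1 y).hasFDerivAt) (hY2 z).hasFDerivAt
  have symA' : ∀ z a b, A' z a b = A' z b a := fun z =>
    second_derivative_symmetric (fun y => (hX1 y).hasFDerivAt) (hX2 z).hasFDerivAt
  have symT12 : ∀ a b, fderiv ℝ A x a b = fderiv ℝ A x b a :=
    second_derivative_symmetric (fun y => (hY2 y).hasFDerivAt) (hY3 x).hasFDerivAt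
  have symT12' : ∀ a b, fderiv ℝ A' x a b = fderiv ℝ A' x b a :=
    second_derivative_symmetric (fun y => (hX2 y).hasFDerivAt) (hX3 x).hasFDerivAt
  have symT23 : ∀ a b c, fderiv ℝ A x a b c = fderiv ℝ A x a c b := by
    intro a b c
    have hfun : (fun z => A z b c) = (fun z => A z c b) := funext fun z => symA z b c
    calc fderiv ℝ A x a b c = fderiv ℝ (fun z => A z b c) x a :=
          (fderiv_apply_const2 (hY3 x) b c a).symm
      _ = fderiv ℝ (fun z => A z c b) x a := by rw [hfun]
      _ = fderiv ℝ A x a c b := fderiv_apply_const2 (hY3 x) c b a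
  have symT23' : ∀ a b c, fderiv ℝ A' x a b c = fderiv ℝ A' x a c b := by
    intro a b c
    have hfun : (fun z => A' z b c) = (fun z => A' z c b) := funext fun z => symA' z b c
    calc fderiv ℝ A' x a b c = fderiv ℝ (fun z => A' z b c) x a :=
          (fderiv_apply_const2 (hX3 x) b c a).symm
      _ = fderiv ℝ (fun z => A' z c b) x a := by rw [hfun]
      _ = fderiv ℝ A' x a c b := fderiv_apply_const2 (hX3 x) c b a
  -- unfold RHS and conclude
  simp only [lieDerivTensor]
  rw [eLHS]
  have r1 : fderiv ℝ A x u v (X x) = fderiv ℝ A x (X x) u v := by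
    rw [symT23 u v (X x), ← symT12 (X x) u]
  have r1' : fderiv ℝ A' x u v (Y x) = fderiv ℝ A' x (Y x) u v := by
    rw [symT23' u v (Y x), ← symT12' (Y x) u]
  rw [r1, r1', symA x v (fderiv ℝ X x u), symA' x v (fderiv ℝ Y x u)]
  abel
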